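/- For any dataset (p^t,x^t)_{t≤T}, the total money pump TMP equals the optimal value ε̄ of the linear program: minimize ∑_{t=1}^T ε_t over (u_1,...,u_T) ∈ ℝ^T and (ε_1,...,ε_T) ∈ ℝ_+^T subject to u_s ≤ u_t + p^t·(x^s - x^t) + ε_t for all s,t ∈ {1,...,T}. -/

import Mathlib

open Matrix BigOperators

namespace TmpLpAux

variable {α : Type*}

/-- Weight of a walk given by a list of vertices. -/
def W (f : α → α → ℝ) : List α → ℝ
  | [] => 0
  | [_] => 0
  | a :: b :: l => f a b + W f (b :: l)

lemma W_cons (f : α → α → ℝ) (a b : α) (l : List α) :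
    W f (a :: b :: l) = f a b + W f (b :: l) := rfl

lemma W_concat (f : α → α → ℝ) :
    ∀ (l : List α) (h : l ≠ []) (s : α),
      W f (l ++ [s]) = W f l + f (l.getLast h) s
  | [], h, _ => absurd rfl h
  | [a], _, s => by simp [W]
  | a :: b :: l, _, s => by
    have IH := W_concat f (b :: l) (by simp) s
    simp only [List.cons_append] at IH ⊢
    rw [W_cons, W_cons, IH, List.getLast_cons (by simp : b :: l ≠ [])]
    ring

lemma W_split (f : α → α → ℝ) :
    ∀ (l1 : List α) (s : α) (m : List α),
      W f (l1 ++ s :: m) = W f (l1 ++ [s]) + W f (s :: m)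
  | [], s, m => by simp [W]
  | [a], s, m => by simp [W, W_cons]
  | a :: b :: l1, s, m => by
    have IH := W_split f (b :: l1) s m
    simp only [List.cons_append] at IH ⊢
    rw [W_cons, W_cons, IH]
    ring

lemma W_cycle_of_chain (f : α → α → ℝ) (ρ : α → α) :
    ∀ (l : List α) (a c : α), List.Chain' (fun x y => ρ x = y) (a :: l) →
      ρ ((a :: l).getLast (by simp)) = c →
      ((a :: l).map (fun t => f t (ρ t))).sum = W f ((a :: l) ++ [c])
  | [], a, c, _, hlast => by
    simp only [List.getLast_singleton] at hlast
    simp [W, hlast]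
  | b :: l, a, c, hchain, hlast => by
    rw [List.Chain', List.isChain_cons_cons] at hchain
    have IH := W_cycle_of_chain f ρ l b c hchain.2
      (by rwa [List.getLast_cons (by simp : b :: l ≠ [])] at hlast)
    simp only [List.map_cons, List.sum_cons, hchain.1, List.cons_append] at IH ⊢
    rw [W_cons, IH]

/-- Existence of a potential for a complete digraph with no negative (simple) cycle. -/
lemma exists_potential {n : ℕ} (f : Fin n → Fin n → ℝ)
    (hcyc : ∀ (a : Fin n) (l : List (Fin n)), (a :: l).Nodup →
      0 ≤ W f ((a :: l) ++ [a])) :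
    ∃ u : Fin n → ℝ, ∀ v s, u s ≤ u v + f v s := by
  classical
  set S : Fin n → Set (List (Fin n)) :=
    fun v => {l | l.Nodup ∧ l.getLast? = some v} with hS
  have hfin : ∀ v, (S v).Finite := by
    intro v
    have h1 : ({l : List (Fin n) | l.Nodup}).Finite :=
      Set.finite_coe_iff.mp (inferInstanceAs (Finite {l : List (Fin n) // l.Nodup}))
    exact h1.subset fun l hl => hl.1
  have hne : ∀ v, (W f '' S v).Nonempty := by
    intro v
    exact ⟨W f [v], ⟨[v], ⟨List.nodup_singleton v, rfl⟩, rfl⟩⟩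
  set u : Fin n → ℝ := fun v => sInf (W f '' S v) with hu
  have hmem : ∀ v, u v ∈ W f '' S v := fun v =>
    Set.Nonempty.csInf_mem (hne v) ((hfin v).image _)
  have hle : ∀ v l, l ∈ S v → u v ≤ W f l := fun v l hl =>
    csInf_le ((hfin v).image _).bddBelow ⟨l, hl, rfl⟩
  refine ⟨u, fun v s => ?_⟩
  obtain ⟨l, hlS, hWl⟩ := hmem v
  obtain ⟨hnd, hlast⟩ := hlS
  have hlne : l ≠ [] := by
    intro h; rw [h] at hlast; simp at hlast
  have hvlast : l.getLast hlne = v := by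
    rw [List.getLast?_eq_getLast hlne] at hlast
    exact Option.some.inj hlast
  have hWconcat : W f (l ++ [s]) = u v + f v s := by
    rw [W_concat f l hlne s, hvlast, hWl]
  by_cases hs : s ∈ l
  · obtain ⟨l1, l2, rfl⟩ := List.append_of_mem hs
    have hnd2 : (s :: l2).Nodup := hnd.sublist (List.sublist_append_right l1 (s :: l2))
    have hnd1 : (l1 ++ [s]).Nodup := by
      refine hnd.sublist ?_
      exact List.Sublist.append_left
        ((List.cons_sublist_cons.mpr (List.nil_sublist l2))) l1
    have hmem1 : (l1 ++ [s]) ∈ S s := ⟨hnd1, by simp⟩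
    have hsplit : W f ((l1 ++ s :: l2) ++ [s])
        = W f (l1 ++ [s]) + W f ((s :: l2) ++ [s]) := by
      have : (l1 ++ s :: l2) ++ [s] = l1 ++ s :: (l2 ++ [s]) := by simp
      rw [this, W_split f l1 s (l2 ++ [s])]
      rfl
    have hcyc2 := hcyc s l2 hnd2
    have h1 : u s ≤ W f (l1 ++ [s]) := hle s _ hmem1
    have h2 : W f (l1 ++ [s]) ≤ u v + f v s := by
      rw [← hWconcat, hsplit]
      linarith
    linarith
  · have hnd' : (l ++ [s]).Nodup := by
      rw [List.nodup_append]
      exact ⟨hnd, List.nodup_singleton s, by intro a ha b hb h; simp at hb; subst hb; subst h; exact hs ha⟩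
    have : (l ++ [s]) ∈ S s := ⟨hnd', by simp⟩
    have := hle s _ this
    rw [hWconcat] at this
    exact this

end TmpLpAux

open TmpLpAux in
/-- the total money pump `TMP` equals the optimal value `ε̄` of the
Allen–Rehbeck linear program. -/
theorem tmp_eq_lp_value
    {L T : ℕ} (p x : Fin T → Fin L → ℝ)
    (hp : ∀ t i, 0 < p t i) (hx : ∀ t i, 0 ≤ x t i) :
    (⨆ σ : Equiv.Perm (Fin T), ∑ t, (p t ⬝ᵥ x t - p t ⬝ᵥ x (σ t))) =
      sInf {v : ℝ | ∃ u ε : Fin T → ℝ, (∀ t, 0 ≤ ε t) ∧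
        (∀ s t : Fin T, u s ≤ u t + (p t ⬝ᵥ x s - p t ⬝ᵥ x t) + ε t) ∧
        v = ∑ t, ε t} := by
  classical
  set c : Fin T → Fin T → ℝ := fun t s => p t ⬝ᵥ x t - p t ⬝ᵥ x s with hc
  set g : Equiv.Perm (Fin T) → ℝ := fun σ => ∑ t, c t (σ t) with hg
  have hglhs : (⨆ σ : Equiv.Perm (Fin T), ∑ t, (p t ⬝ᵥ x t - p t ⬝ᵥ x (σ t)))
      = ⨆ σ, g σ := rfl
  -- the sup is attained
  obtain ⟨σ', hσ'⟩ : ∃ σ' : Equiv.Perm (Fin T), ∀ τ, g τ ≤ g σ' := by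
    obtain ⟨σ', _, hσ'⟩ := Finset.exists_max_image Finset.univ g ⟨1, Finset.mem_univ 1⟩
    exact ⟨σ', fun τ => hσ' τ (Finset.mem_univ τ)⟩
  have hsup : (⨆ σ, g σ) = g σ' :=
    le_antisymm (ciSup_le hσ') (le_ciSup (Set.Finite.bddAbove (Set.finite_range g)) σ')
  -- every feasible value dominates every permutation value
  have key : ∀ v ∈ {v : ℝ | ∃ u ε : Fin T → ℝ, (∀ t, 0 ≤ ε t) ∧
      (∀ s t : Fin T, u s ≤ u t + (p t ⬝ᵥ x s - p t ⬝ᵥ x t) + ε t) ∧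
      v = ∑ t, ε t}, ∀ σ : Equiv.Perm (Fin T), g σ ≤ v := by
    rintro v ⟨u, ε, hε, hcon, rfl⟩ σ
    have h1 : ∀ t, c t (σ t) ≤ u t - u (σ t) + ε t := by
      intro t
      have := hcon (σ t) t
      simp only [hc]
      linarith
    calc g σ ≤ ∑ t, (u t - u (σ t) + ε t) := Finset.sum_le_sum fun t _ => h1 t
      _ = ∑ t, u t - ∑ t, u (σ t) + ∑ t, ε t := by
          rw [Finset.sum_add_distrib, Finset.sum_sub_distrib]
      _ = ∑ t, ε t := by rw [Equiv.sum_comp σ u]; ring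
  -- construct an optimal feasible point from σ'
  set f : Fin T → Fin T → ℝ := fun t s => c t (σ' t) - c t (σ' s) with hf
  have hcyc : ∀ (a : Fin T) (l : List (Fin T)), (a :: l).Nodup →
      0 ≤ W f ((a :: l) ++ [a]) := by
    intro a l hnd
    set ρ := (a :: l).formPerm with hρ
    have hchain : List.Chain' (fun s t => ρ s = t) (a :: l) := by
      rw [List.Chain', List.isChain_iff_getElem]
      intro i hi
      have hi' : i < (a :: l).length := by
        simp at hi ⊢; omega
      have hi'' : i + 1 < (a :: l).length := by
        simp at hi ⊢; omega
      have h1 := List.formPerm_apply_getElem (a :: l) hnd i hi'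
      have h2 : (a :: l)[(i + 1) % (a :: l).length]'(Nat.mod_lt _ (by simp))
          = (a :: l)[i + 1]'hi'' := by
        congr 1
        exact Nat.mod_eq_of_lt hi''
      rw [h1, h2]
    have hlast : ρ ((a :: l).getLast (by simp)) = a :=
      List.formPerm_apply_getLast a l
    have hW := W_cycle_of_chain f ρ (l := l) (a := a) (c := a) hchain hlast
    -- compare g (ρ.trans σ') with g σ'
    have hsum : ∑ t, f t (ρ t) = g σ' - g (ρ.trans σ') := by
      simp only [hf, hg]
      rw [← Finset.sum_sub_distrib]
      rfl
    have hfix : ∀ t ∈ Finset.univ, t ∉ (a :: l).toFinset → f t (ρ t) = 0 := by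
      intro t _ ht
      rw [List.mem_toFinset] at ht
      rw [List.formPerm_apply_of_notMem ht]
      simp [hf]
    have hsum2 : ∑ t, f t (ρ t) = ∑ t ∈ (a :: l).toFinset, f t (ρ t) :=
      (Finset.sum_subset (Finset.subset_univ _) hfix).symm
    have hsum3 : ∑ t ∈ (a :: l).toFinset, f t (ρ t)
        = ((a :: l).map (fun t => f t (ρ t))).sum :=
      List.sum_toFinset _ hnd
    have hopt : g (ρ.trans σ') ≤ g σ' := hσ' _
    rw [← hW, ← hsum3, ← hsum2, hsum]
    linarith
  obtain ⟨w, hw⟩ := exists_potential f hcyc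
  -- build (u, ε)
  set u : Fin T → ℝ := fun s => w (σ'.symm s) with huu
  set ε : Fin T → ℝ := fun t => c t (σ' t) + u (σ' t) - u t with hεε
  have hueq : ∀ t, u (σ' t) = w t := by intro t; simp [huu]
  have hcon : ∀ s t : Fin T, u s ≤ u t + (p t ⬝ᵥ x s - p t ⬝ᵥ x t) + ε t := by
    intro s t
    have := hw t (σ'.symm s)
    simp only [hf, hc] at this
    rw [Equiv.apply_symm_apply] at this
    have h2 : u (σ' t) = w t := hueq t
    simp only [huu, hεε, hc] at *
    linarith
  have hεpos : ∀ t, 0 ≤ ε t := by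
    intro t
    have := hcon t t
    simp only [sub_self] at this
    linarith
  have hεsum : ∑ t, ε t = g σ' := by
    simp only [hεε, hg]
    rw [Finset.sum_sub_distrib, Finset.sum_add_distrib, Equiv.sum_comp σ' u]
    ring
  -- conclude
  rw [hglhs, hsup]
  apply le_antisymm
  · apply le_csInf
    · exact ⟨∑ t, ε t, u, ε, hεpos, hcon, rfl⟩
    · intro v hv
      exact key v hv σ'
  · apply csInf_le
    · exact ⟨g σ', fun v hv => le_trans (hσ' σ') (key v hv σ')⟩
    · exact ⟨u, ε, hεpos, hcon, hεsum.symm⟩
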